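/- Let α > 1 and d(i,j)=max(|i-j|,1). Then ∑_{k ≥ n, p < n, p' ≥ 0, ℓ' < 0 with n > p > p' ≥ 0} d(k,p)^{-2α} d(p,p')^{-α} d(p',ℓ')^{-2α} ≤ C · n^{-α} for some constant C depending only on α; in particular, for 1 < α ≤ 2 this quantity is O(n^{2-2α}) and for α > 2 it is O(n^{-α}). -/

import Mathlib

/-- Modified distance on the one-dimensional lattice `ℤ`: `d i j = max |i - j| 1`. -/
noncomputable def dZ (i j : ℤ) : ℝ := max |(i : ℝ) - (j : ℝ)| 1

open Finset

namespace Stmt5Aux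

lemma anti {α x y : ℝ} (hα : 0 < α) (hx : 0 < x) (hxy : x ≤ y) : y ^ (-α) ≤ x ^ (-α) :=
  Real.rpow_le_rpow_of_nonpos hx hxy (by linarith)

lemma summableZ {α : ℝ} (hα : 1 < α) : Summable (fun m : ℕ => ((m : ℝ) + 1) ^ (-α)) := by
  have h : Summable (fun m : ℕ => ((m : ℝ)) ^ (-α)) := Real.summable_nat_rpow.2 (by linarith)
  have h2 := (summable_nat_add_iff 1).2 h
  convert h2 using 2 with m
  · rfl
  push_cast
  ring

lemma partialZ {α : ℝ} (hα : 1 < α) (N : ℕ) :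
    ∑ m ∈ range N, ((m : ℝ) + 1) ^ (-α) ≤ ∑' m : ℕ, ((m : ℝ) + 1) ^ (-α) :=
  Summable.sum_le_tsum _ (fun m _ => Real.rpow_nonneg (by positivity) _) (summableZ hα)

lemma oneleZ {α : ℝ} (hα : 1 < α) : 1 ≤ ∑' m : ℕ, ((m : ℝ) + 1) ^ (-α) := by
  have h := partialZ hα 1
  simpa using h


/-- swapped inner sum bound -/
lemma L1 {α : ℝ} (hα : 1 < α) (n c : ℕ) :
    ∑ p ∈ range n, (if c < p then ((p : ℝ) - (c : ℝ)) ^ (-α) else 0)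
      ≤ ∑' m : ℕ, ((m : ℝ) + 1) ^ (-α) := by
  rw [← Finset.sum_filter]
  have hfe : (range n).filter (fun p => c < p) = Finset.Ico (c + 1) n := by
    ext x; simp [Finset.mem_range, Finset.mem_Ico]; omega
  rw [hfe, Finset.sum_Ico_eq_sum_range]
  have : ∀ i ∈ range (n - (c + 1)), ((↑(c + 1 + i) : ℝ) - (c : ℝ)) ^ (-α)
      = ((i : ℝ) + 1) ^ (-α) := by
    intro i _
    push_cast
    ring_nf
  rw [Finset.sum_congr rfl this]
  exact partialZ hα _

lemma L2 {α : ℝ} (hα : 1 < α) (n : ℕ) :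
    ∑ p ∈ range n, ((n : ℝ) - (p : ℝ)) ^ (-α) ≤ ∑' m : ℕ, ((m : ℝ) + 1) ^ (-α) := by
  have hrefl := Finset.sum_range_reflect (fun j => ((j : ℝ) + 1) ^ (-α)) n
  have he : ∑ p ∈ range n, ((n : ℝ) - (p : ℝ)) ^ (-α)
      = ∑ j ∈ range n, ((↑(n - 1 - j) : ℝ) + 1) ^ (-α) := by
    refine Finset.sum_congr rfl fun p hp => ?_
    rw [Finset.mem_range] at hp
    have : ((n - 1 - p : ℕ) : ℝ) = (n : ℝ) - 1 - (p : ℝ) := by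
      have : n - 1 - p = n - (p + 1) := by omega
      rw [this, Nat.cast_sub (by omega)]
      push_cast; ring
    rw [this]; ring_nf
  rw [he, hrefl]
  exact partialZ hα _

lemma core {α : ℝ} (hα : 0 < α) {n U V W : ℝ} (hU : 1 ≤ U) (hV : 1 ≤ V) (hW : 1 ≤ W)
    (hn : n ≤ U + V + W) (hn0 : 0 < n) :
    (U * V * W) ^ (-α) ≤ (n / 3) ^ (-α) *
      (V ^ (-α) * W ^ (-α) + U ^ (-α) * W ^ (-α) + U ^ (-α) * V ^ (-α)) := by
  have hU0 : (0:ℝ) < U := by linarith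
  have hV0 : (0:ℝ) < V := by linarith
  have hW0 : (0:ℝ) < W := by linarith
  have hmax : n / 3 ≤ U ∨ n / 3 ≤ V ∨ n / 3 ≤ W := by
    by_contra h
    push_neg at h
    obtain ⟨h1, h2, h3⟩ := h
    linarith
  have hn3 : (0:ℝ) < n / 3 := by linarith
  have nU : 0 ≤ U ^ (-α) := Real.rpow_nonneg hU0.le _
  have nV : 0 ≤ V ^ (-α) := Real.rpow_nonneg hV0.le _
  have nW : 0 ≤ W ^ (-α) := Real.rpow_nonneg hW0.le _
  have nN : 0 ≤ (n / 3) ^ (-α) := Real.rpow_nonneg hn3.le _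
  have heq : (U * V * W) ^ (-α) = U ^ (-α) * V ^ (-α) * W ^ (-α) := by
    rw [Real.mul_rpow (by positivity) hW0.le, Real.mul_rpow hU0.le hV0.le]
  rw [heq]
  rcases hmax with h | h | h
  · have h1 : U ^ (-α) ≤ (n / 3) ^ (-α) := anti hα hn3 h
    calc U ^ (-α) * V ^ (-α) * W ^ (-α) = U ^ (-α) * (V ^ (-α) * W ^ (-α)) := by ring
      _ ≤ (n / 3) ^ (-α) * (V ^ (-α) * W ^ (-α)) :=
          mul_le_mul_of_nonneg_right h1 (mul_nonneg nV nW)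
      _ ≤ _ := by
          have h2 := mul_nonneg nU nW
          have h3 := mul_nonneg nU nV
          have h4 := mul_nonneg nV nW
          apply mul_le_mul_of_nonneg_left _ nN
          linarith
  · have h1 : V ^ (-α) ≤ (n / 3) ^ (-α) := anti hα hn3 h
    calc U ^ (-α) * V ^ (-α) * W ^ (-α) = V ^ (-α) * (U ^ (-α) * W ^ (-α)) := by ring
      _ ≤ (n / 3) ^ (-α) * (U ^ (-α) * W ^ (-α)) :=
          mul_le_mul_of_nonneg_right h1 (mul_nonneg nU nW)
      _ ≤ _ := by
          have h2 := mul_nonneg nU nW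
          have h3 := mul_nonneg nU nV
          have h4 := mul_nonneg nV nW
          apply mul_le_mul_of_nonneg_left _ nN
          linarith
  · have h1 : W ^ (-α) ≤ (n / 3) ^ (-α) := anti hα hn3 h
    calc U ^ (-α) * V ^ (-α) * W ^ (-α) = W ^ (-α) * (U ^ (-α) * V ^ (-α)) := by ring
      _ ≤ (n / 3) ^ (-α) * (U ^ (-α) * V ^ (-α)) :=
          mul_le_mul_of_nonneg_right h1 (mul_nonneg nU nV)
      _ ≤ _ := by
          have h2 := mul_nonneg nU nW
          have h3 := mul_nonneg nU nV
          have h4 := mul_nonneg nV nW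
          apply mul_le_mul_of_nonneg_left _ nN
          linarith


lemma term_bound {α : ℝ} (hα : 1 < α) (n p p' a b : ℕ) (hp : p < n) (hp' : p' < p) :
    dZ ((n : ℤ) + (a : ℤ)) (p : ℤ) ^ (-(2 * α)) * dZ (p : ℤ) (p' : ℤ) ^ (-α) *
        dZ (p' : ℤ) (-1 - (b : ℤ)) ^ (-(2 * α)) ≤
      ((a : ℝ) + 1) ^ (-α) * ((b : ℝ) + 1) ^ (-α) * (((n : ℝ) / 3) ^ (-α) *
        (((p : ℝ) - (p' : ℝ)) ^ (-α) * ((p' : ℝ) + 1) ^ (-α)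
          + ((n : ℝ) - (p : ℝ)) ^ (-α) * ((p' : ℝ) + 1) ^ (-α)
          + ((n : ℝ) - (p : ℝ)) ^ (-α) * ((p : ℝ) - (p' : ℝ)) ^ (-α))) := by
  have hα0 : (0:ℝ) < α := by linarith
  set U : ℝ := (n : ℝ) - (p : ℝ) with hUdef
  set V : ℝ := (p : ℝ) - (p' : ℝ) with hVdef
  set W : ℝ := (p' : ℝ) + 1 with hWdef
  have hU : (1:ℝ) ≤ U := by
    have : (p : ℝ) + 1 ≤ (n : ℝ) := by exact_mod_cast hp
    simp only [hUdef]; linarith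
  have hV : (1:ℝ) ≤ V := by
    have : (p' : ℝ) + 1 ≤ (p : ℝ) := by exact_mod_cast hp'
    simp only [hVdef]; linarith
  have hW : (1:ℝ) ≤ W := by
    have : (0:ℝ) ≤ (p' : ℝ) := Nat.cast_nonneg p'
    simp only [hWdef]; linarith
  have ha0 : (0:ℝ) ≤ (a : ℝ) := Nat.cast_nonneg a
  have hb0 : (0:ℝ) ≤ (b : ℝ) := Nat.cast_nonneg b
  have d1 : dZ ((n : ℤ) + (a : ℤ)) (p : ℤ) = U + (a : ℝ) := by
    unfold dZ
    push_cast
    rw [abs_of_nonneg (by simp only [hUdef] at *; linarith),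
      max_eq_left (by simp only [hUdef] at *; linarith)]
    simp only [hUdef]; ring
  have d2 : dZ (p : ℤ) (p' : ℤ) = V := by
    unfold dZ
    push_cast
    rw [abs_of_nonneg (by simp only [hVdef] at *; linarith),
      max_eq_left (by simp only [hVdef] at *; linarith)]
  have d3 : dZ (p' : ℤ) (-1 - (b : ℤ)) = W + (b : ℝ) := by
    unfold dZ
    push_cast
    rw [abs_of_nonneg (by simp only [hWdef] at *; linarith),
      max_eq_left (by simp only [hWdef] at *; linarith)]
    simp only [hWdef]; ring
  rw [d1, d2, d3]
  have hx0 : (0:ℝ) < U + a := by linarith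
  have hz0 : (0:ℝ) < W + b := by linarith
  have hsplit : ∀ x : ℝ, 0 < x → x ^ (-(2 * α)) = x ^ (-α) * x ^ (-α) := by
    intro x hx
    rw [show -(2 * α) = -α + -α by ring, Real.rpow_add hx]
  have hx : (U + (a:ℝ)) ^ (-(2 * α)) ≤ U ^ (-α) * ((a : ℝ) + 1) ^ (-α) := by
    rw [hsplit _ hx0]
    exact mul_le_mul (anti hα0 (by linarith) (by linarith))
      (anti hα0 (by linarith) (by linarith)) (Real.rpow_nonneg hx0.le _)
      (Real.rpow_nonneg (by linarith) _)
  have hz : (W + (b:ℝ)) ^ (-(2 * α)) ≤ W ^ (-α) * ((b : ℝ) + 1) ^ (-α) := by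
    rw [hsplit _ hz0]
    exact mul_le_mul (anti hα0 (by linarith) (by linarith))
      (anti hα0 (by linarith) (by linarith)) (Real.rpow_nonneg hz0.le _)
      (Real.rpow_nonneg (by linarith) _)
  have step1 : (U + (a:ℝ)) ^ (-(2 * α)) * V ^ (-α) * (W + (b:ℝ)) ^ (-(2 * α)) ≤
      (U ^ (-α) * ((a : ℝ) + 1) ^ (-α)) * V ^ (-α) * (W ^ (-α) * ((b : ℝ) + 1) ^ (-α)) := by
    have hVnn : (0:ℝ) ≤ V ^ (-α) := Real.rpow_nonneg (by linarith) _
    apply mul_le_mul (mul_le_mul hx le_rfl hVnn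
      (mul_nonneg (Real.rpow_nonneg (by linarith) _) (Real.rpow_nonneg (by linarith) _)))
      hz (Real.rpow_nonneg hz0.le _)
    positivity
  refine step1.trans ?_
  have heq : (U ^ (-α) * ((a : ℝ) + 1) ^ (-α)) * V ^ (-α) * (W ^ (-α) * ((b : ℝ) + 1) ^ (-α))
      = ((a : ℝ) + 1) ^ (-α) * ((b : ℝ) + 1) ^ (-α) * (U ^ (-α) * V ^ (-α) * W ^ (-α)) := by
    ring
  rw [heq]
  apply mul_le_mul_of_nonneg_left _ (by positivity)
  have hcore := core hα0 hU hV hW (show (n:ℝ) ≤ U + V + W by simp only [hUdef, hVdef, hWdef]; linarith)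
    (show (0:ℝ) < n by exact_mod_cast lt_of_le_of_lt (Nat.zero_le p) hp)
  calc U ^ (-α) * V ^ (-α) * W ^ (-α) = (U * V * W) ^ (-α) := by
        rw [Real.mul_rpow (by positivity) (by linarith), Real.mul_rpow (by linarith) (by linarith)]
      _ ≤ _ := hcore


lemma double_bound {α : ℝ} (hα : 1 < α) (n : ℕ) :
    ∑ p ∈ range n, ∑ p' ∈ range p,
      (((p : ℝ) - (p' : ℝ)) ^ (-α) * ((p' : ℝ) + 1) ^ (-α)
        + ((n : ℝ) - (p : ℝ)) ^ (-α) * ((p' : ℝ) + 1) ^ (-α)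
        + ((n : ℝ) - (p : ℝ)) ^ (-α) * ((p : ℝ) - (p' : ℝ)) ^ (-α))
      ≤ 3 * (∑' m : ℕ, ((m : ℝ) + 1) ^ (-α)) ^ 2 := by
  set Z : ℝ := ∑' m : ℕ, ((m : ℝ) + 1) ^ (-α) with hZdef
  have hZ0 : (0:ℝ) ≤ Z := le_trans zero_le_one (oneleZ hα)
  have hUpos : ∀ p ∈ range n, (0:ℝ) < (n : ℝ) - (p : ℝ) := by
    intro p hp
    rw [mem_range] at hp
    have : (p : ℝ) + 1 ≤ (n : ℝ) := by exact_mod_cast hp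
    linarith
  have hVpos : ∀ p' p : ℕ, p' < p → (0:ℝ) < (p : ℝ) - (p' : ℝ) := by
    intro p' p h
    have : (p' : ℝ) + 1 ≤ (p : ℝ) := by exact_mod_cast h
    linarith
  have hWnn : ∀ p' : ℕ, (0:ℝ) ≤ ((p' : ℝ) + 1) ^ (-α) :=
    fun p' => Real.rpow_nonneg (by positivity) _
  simp only [Finset.sum_add_distrib]
  have T1 : ∑ p ∈ range n, ∑ p' ∈ range p,
      ((p : ℝ) - (p' : ℝ)) ^ (-α) * ((p' : ℝ) + 1) ^ (-α) ≤ Z ^ 2 := by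
    have hrw : ∀ p ∈ range n, ∑ p' ∈ range p,
        ((p : ℝ) - (p' : ℝ)) ^ (-α) * ((p' : ℝ) + 1) ^ (-α)
        = ∑ p' ∈ range n,
          (if p' < p then ((p : ℝ) - (p' : ℝ)) ^ (-α) * ((p' : ℝ) + 1) ^ (-α) else 0) := by
      intro p hp
      rw [mem_range] at hp
      have hfil : (range n).filter (fun p' => p' < p) = range p := by
        ext x; simp only [mem_filter, mem_range]; omega
      rw [← hfil, Finset.sum_filter]
    rw [Finset.sum_congr rfl hrw, Finset.sum_comm]
    have inner : ∀ p' ∈ range n, ∑ p ∈ range n,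
        (if p' < p then ((p : ℝ) - (p' : ℝ)) ^ (-α) * ((p' : ℝ) + 1) ^ (-α) else 0)
        ≤ ((p' : ℝ) + 1) ^ (-α) * Z := by
      intro p' _
      have hite : ∀ p ∈ range n,
          (if p' < p then ((p : ℝ) - (p' : ℝ)) ^ (-α) * ((p' : ℝ) + 1) ^ (-α) else 0)
          = ((p' : ℝ) + 1) ^ (-α) * (if p' < p then ((p : ℝ) - (p' : ℝ)) ^ (-α) else 0) := by
        intro p _
        split_ifs with h
        · ring
        · rw [mul_zero]
      rw [Finset.sum_congr rfl hite, ← Finset.mul_sum]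
      exact mul_le_mul_of_nonneg_left (L1 hα n p') (hWnn p')
    refine (Finset.sum_le_sum inner).trans ?_
    rw [← Finset.sum_mul]
    calc (∑ p' ∈ range n, ((p' : ℝ) + 1) ^ (-α)) * Z ≤ Z * Z :=
          mul_le_mul_of_nonneg_right (partialZ hα n) hZ0
      _ = Z ^ 2 := (sq Z).symm
  have T2 : ∑ p ∈ range n, ∑ p' ∈ range p,
      ((n : ℝ) - (p : ℝ)) ^ (-α) * ((p' : ℝ) + 1) ^ (-α) ≤ Z ^ 2 := by
    have inner : ∀ p ∈ range n, ∑ p' ∈ range p,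
        ((n : ℝ) - (p : ℝ)) ^ (-α) * ((p' : ℝ) + 1) ^ (-α)
        ≤ ((n : ℝ) - (p : ℝ)) ^ (-α) * Z := by
      intro p hp
      rw [← Finset.mul_sum]
      exact mul_le_mul_of_nonneg_left (partialZ hα p)
        (Real.rpow_nonneg (hUpos p hp).le _)
    refine (Finset.sum_le_sum inner).trans ?_
    rw [← Finset.sum_mul]
    calc (∑ p ∈ range n, ((n : ℝ) - (p : ℝ)) ^ (-α)) * Z ≤ Z * Z :=
          mul_le_mul_of_nonneg_right (L2 hα n) hZ0
      _ = Z ^ 2 := (sq Z).symm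
  have T3 : ∑ p ∈ range n, ∑ p' ∈ range p,
      ((n : ℝ) - (p : ℝ)) ^ (-α) * ((p : ℝ) - (p' : ℝ)) ^ (-α) ≤ Z ^ 2 := by
    have inner : ∀ p ∈ range n, ∑ p' ∈ range p,
        ((n : ℝ) - (p : ℝ)) ^ (-α) * ((p : ℝ) - (p' : ℝ)) ^ (-α)
        ≤ ((n : ℝ) - (p : ℝ)) ^ (-α) * Z := by
      intro p hp
      rw [← Finset.mul_sum]
      exact mul_le_mul_of_nonneg_left (L2 hα p)
        (Real.rpow_nonneg (hUpos p hp).le _)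
    refine (Finset.sum_le_sum inner).trans ?_
    rw [← Finset.sum_mul]
    calc (∑ p ∈ range n, ((n : ℝ) - (p : ℝ)) ^ (-α)) * Z ≤ Z * Z :=
          mul_le_mul_of_nonneg_right (L2 hα n) hZ0
      _ = Z ^ 2 := (sq Z).symm
  linarith

lemma prod_sum_bound {α : ℝ} (hα : 1 < α) (s : Finset (ℕ × ℕ)) :
    ∑ ab ∈ s, ((ab.1 : ℝ) + 1) ^ (-α) * ((ab.2 : ℝ) + 1) ^ (-α)
      ≤ (∑' m : ℕ, ((m : ℝ) + 1) ^ (-α)) ^ 2 := by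
  set Z : ℝ := ∑' m : ℕ, ((m : ℝ) + 1) ^ (-α) with hZdef
  have hZ0 : (0:ℝ) ≤ Z := le_trans zero_le_one (oneleZ hα)
  set N : ℕ := s.sup (fun ab => max ab.1 ab.2) + 1 with hNdef
  have hsub : s ⊆ range N ×ˢ range N := by
    intro ab hab
    have h1 := Finset.le_sup (f := fun ab : ℕ × ℕ => max ab.1 ab.2) hab
    have h2 : ab.1 ≤ s.sup (fun ab => max ab.1 ab.2) := le_trans (le_max_left _ _) h1
    have h3 : ab.2 ≤ s.sup (fun ab => max ab.1 ab.2) := le_trans (le_max_right _ _) h1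
    simp only [mem_product, mem_range]
    omega
  calc ∑ ab ∈ s, ((ab.1 : ℝ) + 1) ^ (-α) * ((ab.2 : ℝ) + 1) ^ (-α)
      ≤ ∑ ab ∈ range N ×ˢ range N, ((ab.1 : ℝ) + 1) ^ (-α) * ((ab.2 : ℝ) + 1) ^ (-α) := by
        apply Finset.sum_le_sum_of_subset_of_nonneg hsub
        intro ab _ _
        exact mul_nonneg (Real.rpow_nonneg (by positivity) _)
          (Real.rpow_nonneg (by positivity) _)
    _ = (∑ a ∈ range N, ((a : ℝ) + 1) ^ (-α)) * (∑ b ∈ range N, ((b : ℝ) + 1) ^ (-α)) := by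
        rw [Finset.sum_product]
        rw [Finset.sum_mul_sum]
    _ ≤ Z * Z := by
        have hnn : (0:ℝ) ≤ ∑ a ∈ range N, ((a : ℝ) + 1) ^ (-α) :=
          Finset.sum_nonneg fun a _ => Real.rpow_nonneg (by positivity) _
        exact mul_le_mul (partialZ hα N) (partialZ hα N) hnn hZ0
    _ = Z ^ 2 := (sq Z).symm

end Stmt5Aux

open Stmt5Aux

/-- For `α > 1` there is a constant `C` depending only on `α` such that for all `n ≥ 1`:
`∑_{k ≥ n} ∑_{ℓ' < 0} ∑_{n > p > p' ≥ 0} d(k,p)^{-2α} d(p,p')^{-α} d(p',ℓ')^{-2α} ≤ C n^{-α}`;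
in particular, for `1 < α ≤ 2` this quantity is `O(n^{2-2α})` (and for `α > 2` it is
`O(n^{-α})`, which is the main bound itself).
Here `k = n + a`, `ℓ' = -1 - b` with `a b : ℕ`. -/
theorem stmt_5 (α : ℝ) (hα : 1 < α) :
    (∃ C : ℝ, 0 < C ∧ ∀ n : ℕ, 1 ≤ n →
      (∑' ab : ℕ × ℕ, ∑ p ∈ Finset.range n, ∑ p' ∈ Finset.range p,
          dZ ((n : ℤ) + (ab.1 : ℤ)) (p : ℤ) ^ (-(2 * α)) *
            dZ (p : ℤ) (p' : ℤ) ^ (-α) *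
              dZ (p' : ℤ) (-1 - (ab.2 : ℤ)) ^ (-(2 * α)))
        ≤ C * (n : ℝ) ^ (-α)) ∧
    (α ≤ 2 → ∃ C' : ℝ, 0 < C' ∧ ∀ n : ℕ, 1 ≤ n →
      (∑' ab : ℕ × ℕ, ∑ p ∈ Finset.range n, ∑ p' ∈ Finset.range p,
          dZ ((n : ℤ) + (ab.1 : ℤ)) (p : ℤ) ^ (-(2 * α)) *
            dZ (p : ℤ) (p' : ℤ) ^ (-α) *
              dZ (p' : ℤ) (-1 - (ab.2 : ℤ)) ^ (-(2 * α)))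
        ≤ C' * (n : ℝ) ^ (2 - 2 * α)) := by
  have hα0 : (0:ℝ) < α := by linarith
  set Z : ℝ := ∑' m : ℕ, ((m : ℝ) + 1) ^ (-α) with hZdef
  have hZ1 : (1:ℝ) ≤ Z := oneleZ hα
  have hZ0 : (0:ℝ) < Z := lt_of_lt_of_le one_pos hZ1
  have hCpos : (0:ℝ) < 3 * (3:ℝ) ^ α * Z ^ 4 :=
    mul_pos (mul_pos (by norm_num) (Real.rpow_pos_of_pos (by norm_num) _)) (pow_pos hZ0 4)
  have main : ∀ n : ℕ, 1 ≤ n →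
      (∑' ab : ℕ × ℕ, ∑ p ∈ Finset.range n, ∑ p' ∈ Finset.range p,
          dZ ((n : ℤ) + (ab.1 : ℤ)) (p : ℤ) ^ (-(2 * α)) *
            dZ (p : ℤ) (p' : ℤ) ^ (-α) *
              dZ (p' : ℤ) (-1 - (ab.2 : ℤ)) ^ (-(2 * α)))
        ≤ (3 * (3:ℝ) ^ α * Z ^ 4) * (n : ℝ) ^ (-α) := by
    intro n hn
    have hn0 : (0:ℝ) < (n : ℝ) := by exact_mod_cast hn
    have hKnn : (0:ℝ) ≤ ((n : ℝ) / 3) ^ (-α) * (3 * Z ^ 2) :=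
      mul_nonneg (Real.rpow_nonneg (by positivity) _) (by positivity)
    have hdiv : ((n : ℝ) / 3) ^ (-α) = (3:ℝ) ^ α * (n : ℝ) ^ (-α) := by
      rw [Real.div_rpow hn0.le (by norm_num : (0:ℝ) ≤ 3),
        Real.rpow_neg (by norm_num : (0:ℝ) ≤ 3)]
      field_simp
    apply tsum_le_of_sum_le' (by positivity)
    intro s
    have hab : ∀ ab ∈ s, (∑ p ∈ Finset.range n, ∑ p' ∈ Finset.range p,
          dZ ((n : ℤ) + (ab.1 : ℤ)) (p : ℤ) ^ (-(2 * α)) *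
            dZ (p : ℤ) (p' : ℤ) ^ (-α) *
              dZ (p' : ℤ) (-1 - (ab.2 : ℤ)) ^ (-(2 * α)))
        ≤ ((ab.1 : ℝ) + 1) ^ (-α) * ((ab.2 : ℝ) + 1) ^ (-α) *
            (((n : ℝ) / 3) ^ (-α) * (3 * Z ^ 2)) := by
      intro ab _
      have hABnn : (0:ℝ) ≤ ((ab.1 : ℝ) + 1) ^ (-α) * ((ab.2 : ℝ) + 1) ^ (-α) *
          ((n : ℝ) / 3) ^ (-α) :=
        mul_nonneg (mul_nonneg (Real.rpow_nonneg (by positivity) _)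
          (Real.rpow_nonneg (by positivity) _)) (Real.rpow_nonneg (by positivity) _)
      calc ∑ p ∈ Finset.range n, ∑ p' ∈ Finset.range p,
            dZ ((n : ℤ) + (ab.1 : ℤ)) (p : ℤ) ^ (-(2 * α)) *
              dZ (p : ℤ) (p' : ℤ) ^ (-α) *
                dZ (p' : ℤ) (-1 - (ab.2 : ℤ)) ^ (-(2 * α))
          ≤ ∑ p ∈ Finset.range n, ∑ p' ∈ Finset.range p,
            (((ab.1 : ℝ) + 1) ^ (-α) * ((ab.2 : ℝ) + 1) ^ (-α) * ((n : ℝ) / 3) ^ (-α)) *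
              (((p : ℝ) - (p' : ℝ)) ^ (-α) * ((p' : ℝ) + 1) ^ (-α)
                + ((n : ℝ) - (p : ℝ)) ^ (-α) * ((p' : ℝ) + 1) ^ (-α)
                + ((n : ℝ) - (p : ℝ)) ^ (-α) * ((p : ℝ) - (p' : ℝ)) ^ (-α)) := by
            apply Finset.sum_le_sum
            intro p hp
            apply Finset.sum_le_sum
            intro p' hp'
            rw [Finset.mem_range] at hp hp'
            exact le_of_le_of_eq (term_bound hα n p p' ab.1 ab.2 hp hp') (by ring)
        _ = (((ab.1 : ℝ) + 1) ^ (-α) * ((ab.2 : ℝ) + 1) ^ (-α) * ((n : ℝ) / 3) ^ (-α)) *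
            ∑ p ∈ Finset.range n, ∑ p' ∈ Finset.range p,
              (((p : ℝ) - (p' : ℝ)) ^ (-α) * ((p' : ℝ) + 1) ^ (-α)
                + ((n : ℝ) - (p : ℝ)) ^ (-α) * ((p' : ℝ) + 1) ^ (-α)
                + ((n : ℝ) - (p : ℝ)) ^ (-α) * ((p : ℝ) - (p' : ℝ)) ^ (-α)) := by
            simp only [← Finset.mul_sum]
        _ ≤ (((ab.1 : ℝ) + 1) ^ (-α) * ((ab.2 : ℝ) + 1) ^ (-α) * ((n : ℝ) / 3) ^ (-α)) *
            (3 * Z ^ 2) := mul_le_mul_of_nonneg_left (double_bound hα n) hABnn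
        _ = ((ab.1 : ℝ) + 1) ^ (-α) * ((ab.2 : ℝ) + 1) ^ (-α) *
            (((n : ℝ) / 3) ^ (-α) * (3 * Z ^ 2)) := by ring
    calc ∑ ab ∈ s, ∑ p ∈ Finset.range n, ∑ p' ∈ Finset.range p,
          dZ ((n : ℤ) + (ab.1 : ℤ)) (p : ℤ) ^ (-(2 * α)) *
            dZ (p : ℤ) (p' : ℤ) ^ (-α) *
              dZ (p' : ℤ) (-1 - (ab.2 : ℤ)) ^ (-(2 * α))
        ≤ ∑ ab ∈ s, ((ab.1 : ℝ) + 1) ^ (-α) * ((ab.2 : ℝ) + 1) ^ (-α) *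
            (((n : ℝ) / 3) ^ (-α) * (3 * Z ^ 2)) := Finset.sum_le_sum hab
      _ = (∑ ab ∈ s, ((ab.1 : ℝ) + 1) ^ (-α) * ((ab.2 : ℝ) + 1) ^ (-α)) *
            (((n : ℝ) / 3) ^ (-α) * (3 * Z ^ 2)) := by rw [← Finset.sum_mul]
      _ ≤ Z ^ 2 * (((n : ℝ) / 3) ^ (-α) * (3 * Z ^ 2)) :=
            mul_le_mul_of_nonneg_right (prod_sum_bound hα s) hKnn
      _ = (3 * (3:ℝ) ^ α * Z ^ 4) * (n : ℝ) ^ (-α) := by rw [hdiv]; ring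
  refine ⟨⟨3 * (3:ℝ) ^ α * Z ^ 4, hCpos, main⟩, fun hα2 => ⟨3 * (3:ℝ) ^ α * Z ^ 4, hCpos,
    fun n hn => (main n hn).trans ?_⟩⟩
  apply mul_le_mul_of_nonneg_left _ hCpos.le
  exact Real.rpow_le_rpow_of_exponent_le (by exact_mod_cast hn) (by linarith)
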